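/- Let G be a finite simple graph and let u, v be distinct vertices each of degree at least 2, and let C = V(G) − {u,v}. Then C completely floods G if and only if {u,v} is not a trigger, i.e., it is not the case that u and v are adjacent and both have degree exactly 2. -/

import Mathlib

open scoped Classical
open Polynomial

noncomputable def floodStep {V : Type*} (G : SimpleGraph V) [Fintype V]
    (C : Finset V) : Finset V :=
  C ∪ Finset.univ.filter (fun x => 2 ≤ (C.filter (fun y => G.Adj x y)).card)

def Floods {V : Type*} (G : SimpleGraph V) [Fintype V] (C : Finset V) : Prop :=
  ∃ k, (floodStep G)^[k] C = Finset.univ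

noncomputable def floodPoly {V : Type*} (G : SimpleGraph V) [Fintype V] :
    Polynomial ℕ :=
  ∑ C ∈ Finset.univ.filter (fun C : Finset V => Floods G C), Polynomial.X ^ C.card

noncomputable def deg {V : Type*} (G : SimpleGraph V) [Fintype V] (v : V) : ℕ :=
  (Finset.univ.filter (fun y => G.Adj v y)).card

lemma subset_floodStep {V : Type*} (G : SimpleGraph V) [Fintype V] (C : Finset V) :
    C ⊆ floodStep G C := Finset.subset_union_left

lemma mem_floodStep {V : Type*} (G : SimpleGraph V) [Fintype V] (C : Finset V) (x : V) :
    x ∈ floodStep G C ↔ x ∈ C ∨ 2 ≤ (C.filter (fun y => G.Adj x y)).card := by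
  simp [floodStep]

/-- If all neighbors of `x` lie in `S`, then `deg x ≤ #(S.filter (Adj x))`. -/
lemma deg_le_filter {V : Type*} (G : SimpleGraph V) [Fintype V] (S : Finset V) (x : V)
    (h : ∀ w, G.Adj x w → w ∈ S) :
    deg G x ≤ (S.filter (fun y => G.Adj x y)).card := by
  apply Finset.card_le_card
  intro w hw
  simp only [Finset.mem_filter, Finset.mem_univ, true_and] at hw ⊢
  exact ⟨h w hw, hw⟩

/-- Trigger fixed-point estimate: neighbors of `u` inside `univ \ {u,v}` number at most `deg u - 1`. -/
lemma filter_card_le {V : Type*} (G : SimpleGraph V) [Fintype V] (u v : V)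
    (hadj : G.Adj u v) :
    ((Finset.univ \ {u, v} : Finset V).filter (fun y => G.Adj u y)).card ≤ deg G u - 1 := by
  have hsub : ((Finset.univ \ {u, v} : Finset V).filter (fun y => G.Adj u y)) ⊆
      (Finset.univ.filter (fun y => G.Adj u y)) \ {v} := by
    intro w hw
    simp only [Finset.mem_filter, Finset.mem_sdiff, Finset.mem_insert,
      Finset.mem_singleton, Finset.mem_univ, true_and, not_or] at hw ⊢
    exact ⟨hw.2, hw.1.2⟩
  calc _ ≤ ((Finset.univ.filter (fun y => G.Adj u y)) \ {v}).card :=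
        Finset.card_le_card hsub
    _ = deg G u - 1 := by
        rw [Finset.card_sdiff_of_subset (by simp [hadj]), Finset.card_singleton]; rfl

/-- Adjacent case with one degree ≥ 3: two steps flood. -/
lemma floods_of_adj {V : Type*} [Fintype V] (G : SimpleGraph V) (u v : V)
    (hadj : G.Adj u v) (hdu : 3 ≤ deg G u) (hdv : 2 ≤ deg G v) :
    Floods G (Finset.univ \ {u, v}) := by
  set C : Finset V := Finset.univ \ {u, v} with hC
  have hmemC : ∀ x, x ≠ u → x ≠ v → x ∈ C := by
    intro x h1 h2; simp [hC, h1, h2]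
  have hu1 : u ∈ floodStep G C := by
    rw [mem_floodStep]
    right
    have hsub : (Finset.univ.filter (fun y => G.Adj u y)) \ {v} ⊆
        C.filter (fun y => G.Adj u y) := by
      intro w hw
      simp only [Finset.mem_sdiff, Finset.mem_filter, Finset.mem_univ, true_and,
        Finset.mem_singleton] at hw ⊢
      exact ⟨hmemC w (fun h => G.irrefl (h ▸ hw.1)) hw.2, hw.1⟩
    have hcard : ((Finset.univ.filter (fun y => G.Adj u y)) \ {v}).card = deg G u - 1 := by
      rw [Finset.card_sdiff_of_subset (by simp [hadj]), Finset.card_singleton]; rfl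
    have := Finset.card_le_card hsub
    omega
  refine ⟨2, ?_⟩
  rw [Function.iterate_succ_apply', Function.iterate_one]
  apply Finset.eq_univ_of_forall
  intro x
  rw [mem_floodStep]
  by_cases hxv : x = v
  · subst hxv
    right
    have hsub : Finset.univ.filter (fun y => G.Adj x y) ⊆
        (floodStep G C).filter (fun y => G.Adj x y) := by
      intro w hw
      simp only [Finset.mem_filter, Finset.mem_univ, true_and] at hw ⊢
      refine ⟨?_, hw⟩
      by_cases hwu : w = u
      · subst hwu; exact hu1
      · exact subset_floodStep G C (hmemC w hwu (G.ne_of_adj hw).symm)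
    have := Finset.card_le_card hsub
    unfold deg at hdv
    omega
  · left
    by_cases hxu : x = u
    · subst hxu; exact hu1
    · exact subset_floodStep G C (hmemC x hxu hxv)

theorem floods_compl_pair_iff_not_trigger {V : Type*} [Fintype V]
    (G : SimpleGraph V) (u v : V) (huv : u ≠ v)
    (hu : 2 ≤ deg G u) (hv : 2 ≤ deg G v) :
    Floods G (Finset.univ \ {u, v}) ↔
      ¬ (G.Adj u v ∧ deg G u = 2 ∧ deg G v = 2) := by
  constructor
  · rintro ⟨k, hk⟩ ⟨hadj, hdu, hdv⟩
    set C : Finset V := Finset.univ \ {u, v} with hC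
    have hfix : floodStep G C = C := by
      apply Finset.Subset.antisymm _ (subset_floodStep G C)
      intro x hx
      rw [mem_floodStep] at hx
      rcases hx with h | h
      · exact h
      · by_contra hxC
        have hx' : x = u ∨ x = v := by
          by_contra h'
          push_neg at h'
          exact hxC (by simp [hC, h'.1, h'.2])
        rcases hx' with rfl | rfl
        · have := filter_card_le G x v hadj
          rw [hC] at h; omega
        · have h2 := filter_card_le G x u (G.adj_symm hadj)
          rw [Finset.pair_comm x u] at h2
          rw [hC] at h; omega
    have hiter : ∀ n, (floodStep G)^[n] C = C := by
      intro n
      induction n with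
      | zero => rfl
      | succ n ih => rw [Function.iterate_succ_apply', ih, hfix]
    rw [hiter k] at hk
    have : u ∈ C := hk ▸ Finset.mem_univ u
    simp [hC] at this
  · intro h
    by_cases hadj : G.Adj u v
    · have h3 : 3 ≤ deg G u ∨ 3 ≤ deg G v := by
        by_contra h'
        push_neg at h'
        exact h ⟨hadj, by omega, by omega⟩
      rcases h3 with h3 | h3
      · exact floods_of_adj G u v hadj h3 hv
      · have := floods_of_adj G v u (G.adj_symm hadj) h3 hu
        rwa [Finset.pair_comm v u] at this
    · -- one step floods
      refine ⟨1, ?_⟩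
      rw [Function.iterate_one]
      apply Finset.eq_univ_of_forall
      intro x
      rw [mem_floodStep]
      set C : Finset V := Finset.univ \ {u, v} with hC
      have key : ∀ w, (G.Adj u w ∨ G.Adj v w) → w ∈ C := by
        intro w hw
        simp only [hC, Finset.mem_sdiff, Finset.mem_univ, true_and, Finset.mem_insert,
          Finset.mem_singleton, not_or]
        rcases hw with hw | hw
        · exact ⟨(G.ne_of_adj hw).symm, fun h' => hadj (h' ▸ hw)⟩
        · exact ⟨fun h' => hadj (G.adj_symm (h' ▸ hw)), (G.ne_of_adj hw).symm⟩
      by_cases hxu : x = u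
      · subst hxu
        right
        have := deg_le_filter G C x (fun w hw => key w (Or.inl hw))
        omega
      · by_cases hxv : x = v
        · subst hxv
          right
          have := deg_le_filter G C x (fun w hw => key w (Or.inr hw))
          omega
        · left; simp [hC, hxu, hxv]
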